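/- Fix R_M > 0 and ε_M = 2^{R_M} − 1, and let w > 0 be the weakest effective channel gain. (i) For every ρ > 0, F_w^{(ρ)}(w) = 0, where F_w^{(ρ)}(x) = log₂(1 + ρ x (w − ε_M/ρ)/(w(1+ε_M))) − (1 − R_M/log₂(1+ρw)) log₂(1+ρx); equivalently, log₂(1 + ρ (w − ε_M/ρ)/(1+ε_M)) = log₂(1+ρw) − R_M. (ii) For every fixed z ≥ w there exists ρ₀ > ε_M/w such that F_w^{(ρ)}(z) ≥ 0 for all ρ ≥ ρ₀; that is, at high SNR the use of NOMA increases every user's capability to decode the unicasting message relative to OMA. -/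

import Mathlib

open Real

private lemma aux_sqrt_one_add_le (t : ℝ) (ht : 0 ≤ t) :
    Real.sqrt (1 + t) ≤ 1 + Real.sqrt t := by
  have h2 : Real.sqrt t * Real.sqrt t = t := Real.mul_self_sqrt ht
  have h3 : Real.sqrt (1 + t) * Real.sqrt (1 + t) = 1 + t :=
    Real.mul_self_sqrt (by linarith)
  nlinarith [Real.sqrt_nonneg t, Real.sqrt_nonneg (1 + t)]

private lemma aux_log_le_two_sqrt (t : ℝ) (ht : 0 ≤ t) :
    Real.log (1 + t) ≤ 2 * Real.sqrt t := by
  have h0 : (0:ℝ) < 1 + t := by linarith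
  have hs1 : Real.log (Real.sqrt (1 + t)) ≤ Real.sqrt (1 + t) - 1 :=
    Real.log_le_sub_one_of_pos (Real.sqrt_pos.mpr h0)
  rw [Real.log_sqrt (le_of_lt h0)] at hs1
  have hs2 := aux_sqrt_one_add_le t ht
  linarith

set_option maxHeartbeats 1600000 in
/-- (i) the rate-difference function vanishes at the weakest user,
`F_w^{(ρ)}(w) = 0` for every `ρ > 0` (equivalently
`log₂(1 + ρ(w − ε_M/ρ)/(1+ε_M)) = log₂(1+ρw) − R_M`); (ii) at high SNR,
`F_w^{(ρ)}(z) ≥ 0` for every fixed `z ≥ w`: NOMA increases every user's capability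
to decode the unicast message relative to OMA. -/
theorem noma_rate_difference_nonneg
    (RM εM : ℝ) (hRM : 0 < RM) (hεM : εM = 2 ^ RM - 1)
    (w : ℝ) (hw : 0 < w)
    (F : ℝ → ℝ → ℝ)
    (hF : ∀ ρ x, F ρ x =
      Real.logb 2 (1 + ρ * x * (w - εM / ρ) / (w * (1 + εM))) -
        (1 - RM / Real.logb 2 (1 + ρ * w)) * Real.logb 2 (1 + ρ * x)) :
    (∀ ρ : ℝ, 0 < ρ → F ρ w = 0 ∧
      Real.logb 2 (1 + ρ * ((w - εM / ρ) / (1 + εM))) =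
        Real.logb 2 (1 + ρ * w) - RM) ∧
    (∀ z : ℝ, w ≤ z → ∃ ρ₀ : ℝ, εM / w < ρ₀ ∧ ∀ ρ : ℝ, ρ₀ ≤ ρ → 0 ≤ F ρ z) := by
  have h2RM : (1:ℝ) < 2 ^ RM := by
    rw [Real.one_lt_rpow_iff_of_pos (by norm_num)]
    exact Or.inl ⟨by norm_num, hRM⟩
  have hεpos : 0 < εM := by rw [hεM]; linarith
  have hεM1 : (1:ℝ) + εM = 2 ^ RM := by rw [hεM]; ring
  have hεM1pos : (0:ℝ) < 1 + εM := by linarith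
  have hlogε : Real.logb 2 (1 + εM) = RM := by
    rw [hεM1]; exact Real.logb_rpow (by norm_num) (by norm_num)
  constructor
  · intro ρ hρ
    have ha : (0:ℝ) < 1 + ρ * w := by positivity
    have ha1 : (1:ℝ) < 1 + ρ * w := by nlinarith
    have hLa : 0 < Real.logb 2 (1 + ρ * w) := Real.logb_pos (by norm_num) ha1
    have hlogdiv : Real.logb 2 ((1 + ρ * w)/(1 + εM)) = Real.logb 2 (1 + ρ * w) - RM := by
      rw [Real.logb_div (ne_of_gt ha) (ne_of_gt hεM1pos), hlogε]
    constructor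
    · rw [hF]
      have key : 1 + ρ * w * (w - εM / ρ) / (w * (1 + εM)) = (1 + ρ * w)/(1 + εM) := by
        field_simp
        ring
      rw [key, hlogdiv]
      field_simp
      ring
    · have key : 1 + ρ * ((w - εM / ρ) / (1 + εM)) = (1 + ρ * w)/(1 + εM) := by
        field_simp
        ring
      rw [key, hlogdiv]
  · intro z hz
    have hz0 : 0 < z := lt_of_lt_of_le hw hz
    have hzw0 : 0 ≤ z - w := by linarith
    obtain ⟨c, hc⟩ : ∃ c : ℝ, c = εM * (z - w) / w := ⟨_, rfl⟩
    have hc0 : 0 ≤ c := by rw [hc]; positivity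
    obtain ⟨D, hD⟩ : ∃ D : ℝ, D = Real.log ((w + z)/(2*w)) := ⟨_, rfl⟩
    have harg1 : (1:ℝ) ≤ (w + z)/(2*w) := by
      rw [le_div_iff₀ (by positivity : (0:ℝ) < 2*w)]; linarith
    have hD0 : 0 ≤ D := by rw [hD]; exact Real.log_nonneg harg1
    have hL2 : 0 < Real.log 2 := Real.log_pos (by norm_num)
    obtain ⟨K, hK⟩ : ∃ K : ℝ, K = RM * D * Real.log 2 := ⟨_, rfl⟩
    have hK0 : 0 ≤ K := by rw [hK]; positivity
    obtain ⟨M, hM⟩ : ∃ M : ℝ, M = 4 * c * Real.sqrt w / (K * z) := ⟨_, rfl⟩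
    have hM0 : 0 ≤ M := by rw [hM]; positivity
    refine ⟨max (εM/w + 1) (max 1 (max (1/w) (max ((2*c+2)/z) (M^2)))), ?_, ?_⟩
    · calc εM/w < εM/w + 1 := by linarith
        _ ≤ _ := le_max_left _ _
    intro ρ hρ
    have hρ1 : (1:ℝ) ≤ ρ := le_trans (le_trans (le_max_left _ _) (le_max_right _ _)) hρ
    have hρ0 : 0 < ρ := by linarith
    have hρiw : 1/w ≤ ρ :=
      le_trans (le_trans (le_trans (le_max_left _ _) (le_max_right _ _)) (le_max_right _ _)) hρ
    have hρw1 : 1 ≤ ρ * w := by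
      rw [div_le_iff₀ hw] at hρiw; linarith
    have hρcz : (2*c+2)/z ≤ ρ :=
      le_trans (le_trans (le_trans (le_trans (le_max_left _ _) (le_max_right _ _)) (le_max_right _ _)) (le_max_right _ _)) hρ
    have hρz : 2*c + 2 ≤ ρ * z := by
      rw [div_le_iff₀ hz0] at hρcz; linarith
    have hρM : M^2 ≤ ρ :=
      le_trans (le_trans (le_trans (le_trans (le_max_right _ _) (le_max_right _ _)) (le_max_right _ _)) (le_max_right _ _)) hρ
    -- abbreviations
    obtain ⟨m, hmm⟩ : ∃ m : ℝ, m = 1 + ρ * z - c := ⟨_, rfl⟩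
    have hm0 : 0 < m := by rw [hmm]; linarith
    have hm2 : ρ * z ≤ 2 * m := by rw [hmm]; linarith
    have ha0 : (0:ℝ) < 1 + ρ * w := by linarith
    have ha1 : (1:ℝ) < 1 + ρ * w := by linarith
    have hbz0 : (0:ℝ) < 1 + ρ * z := by
      have := mul_pos hρ0 hz0; linarith
    have hLa : 0 < Real.log (1 + ρ * w) := Real.log_pos ha1
    -- rewrite F
    rw [hF]
    have key : 1 + ρ * z * (w - εM / ρ) / (w * (1 + εM)) = m / (1 + εM) := by
      rw [hmm, hc]
      field_simp
      ring
    rw [key, Real.logb_div (ne_of_gt hm0) (ne_of_gt hεM1pos), hlogε]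
    simp only [Real.logb]
    set La : ℝ := Real.log (1 + ρ * w) with hLa'
    set Lz : ℝ := Real.log (1 + ρ * z) with hLz'
    set Lm : ℝ := Real.log m with hLm'
    set L2 : ℝ := Real.log 2 with hL2'
    -- fact A : Lz - Lm ≤ c / m
    have hA : Lz - Lm ≤ c / m := by
      have h1 : Real.log ((1 + ρ * z) / m) ≤ (1 + ρ * z) / m - 1 :=
        Real.log_le_sub_one_of_pos (by positivity)
      rw [Real.log_div (ne_of_gt hbz0) (ne_of_gt hm0)] at h1
      have h2 : (1 + ρ * z) / m - 1 = c / m := by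
        rw [div_sub_one (ne_of_gt hm0)]
        congr 1
        rw [hmm]; ring
      rw [h2] at h1; exact h1
    have hAm : 0 ≤ Lz - Lm := by
      have : Lm ≤ Lz := Real.log_le_log hm0 (by rw [hmm]; linarith)
      linarith
    -- fact B : D ≤ Lz - La
    have hB : D ≤ Lz - La := by
      have harg0 : (0:ℝ) < (w + z)/(2*w) := by positivity
      have hfac : (w + z)/(2*w) * (1 + ρ * w) ≤ 1 + ρ * z := by
        rw [div_mul_eq_mul_div, div_le_iff₀ (by positivity : (0:ℝ) < 2*w)]
        have hh : 0 ≤ (z - w) * (ρ * w - 1) :=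
          mul_nonneg hzw0 (by linarith)
        nlinarith [hh]
      have h1 : Real.log ((w + z)/(2*w) * (1 + ρ * w)) ≤ Lz :=
        Real.log_le_log (by positivity) hfac
      rw [Real.log_mul (ne_of_gt harg0) (ne_of_gt ha0)] at h1
      rw [hD]; linarith
    -- fact C : La ≤ 2 * sqrt (ρ * w)
    have hC : La ≤ 2 * Real.sqrt (ρ * w) := by
      rw [hLa']
      exact aux_log_le_two_sqrt (ρ * w) (by linarith)
    -- key : 2 * c * sqrt (ρ * w) ≤ K * m
    have hKey : 2 * c * Real.sqrt (ρ * w) ≤ K * m := by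
      rcases eq_or_lt_of_le hc0 with hceq | hcpos
      · rw [← hceq]; simpa using mul_nonneg hK0 (le_of_lt hm0)
      · have hzw : w < z := by
          rcases lt_or_eq_of_le hz with h | h
          · exact h
          · exfalso
            rw [hc, ← h, sub_self, mul_zero, zero_div] at hcpos
            exact lt_irrefl 0 hcpos
        have hDpos : 0 < D := by
          rw [hD]
          apply Real.log_pos
          rw [lt_div_iff₀ (by positivity : (0:ℝ) < 2*w)]; linarith
        have hKpos : 0 < K := by rw [hK]; positivity
        have hsqρ : M ≤ Real.sqrt ρ := by
          have h := Real.sqrt_le_sqrt hρM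
          rwa [Real.sqrt_sq hM0] at h
        have hmul : Real.sqrt ρ * Real.sqrt ρ = ρ := Real.mul_self_sqrt (le_of_lt hρ0)
        have hsm : Real.sqrt (ρ * w) = Real.sqrt ρ * Real.sqrt w :=
          Real.sqrt_mul (le_of_lt hρ0) w
        have hMdef : M * (K * z) = 4 * c * Real.sqrt w := by
          rw [hM]; field_simp
        have hsρ0 : 0 ≤ Real.sqrt ρ := Real.sqrt_nonneg ρ
        have step1 : K * (ρ * z) / 2 ≤ K * m := by
          have := mul_le_mul_of_nonneg_left hm2 (le_of_lt hKpos)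
          linarith
        have step2 : (K * z / 2) * (M * Real.sqrt ρ) ≤ K * (ρ * z) / 2 := by
          calc (K * z / 2) * (M * Real.sqrt ρ)
              ≤ (K * z / 2) * (Real.sqrt ρ * Real.sqrt ρ) := by
                apply mul_le_mul_of_nonneg_left
                  (mul_le_mul_of_nonneg_right hsqρ hsρ0) (by positivity)
            _ = K * (ρ * z) / 2 := by rw [hmul]; ring
        have step3 : 2 * c * Real.sqrt (ρ * w) = (K * z / 2) * (M * Real.sqrt ρ) := by
          rw [hsm]
          linear_combination (-(Real.sqrt ρ)/2) * hMdef
        linarith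
    -- conclude
    have hcm : 0 ≤ c / m := by positivity
    have main : La * (Lz - Lm) ≤ RM * L2 * (Lz - La) := by
      calc La * (Lz - Lm) ≤ La * (c / m) :=
            mul_le_mul_of_nonneg_left hA (le_of_lt hLa)
        _ ≤ (2 * Real.sqrt (ρ * w)) * (c / m) := mul_le_mul_of_nonneg_right hC hcm
        _ = (2 * c * Real.sqrt (ρ * w)) / m := by ring
        _ ≤ (K * m) / m := by gcongr
        _ = K := by field_simp
        _ = RM * L2 * D := by rw [hK]; ring
        _ ≤ RM * L2 * (Lz - La) :=
            mul_le_mul_of_nonneg_left hB (by positivity)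
    have hexp : Lm / L2 - RM - (1 - RM / (La / L2)) * (Lz / L2)
        = (RM * L2 * (Lz - La) - La * (Lz - Lm)) / (L2 * La) := by
      field_simp
      ring
    rw [hexp]
    apply div_nonneg (by linarith) (by positivity)
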